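/- Let M be a compact topological space and f : M → ℝ^{k+1} continuous. If f admits a Lagrangian dual section (a continuous D : ℝ^{k+1}_{0+} → M with D(t) ∈ argmax_{x ∈ M} ⟨t, f(x)⟩ for all t), then for every c ∈ ℝ^k, sup { f_0(x) : f_i(x) = c_i for i = 1,…,k, x ∈ M } = sup { y_0 : y_i = c_i for i = 1,…,k, y ∈ conv(f(M)) }. -/

import Mathlib

open scoped BigOperators
open scoped RealInnerProductSpace

noncomputable def auxBeta (k : ℕ) (ε : ℝ) (lam : EuclideanSpace ℝ (Fin k)) :
    EuclideanSpace ℝ (Fin k) :=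
  (ε / (2 * max 1 (ε * ‖lam‖ / 2))) • lam

lemma auxBeta_continuous (k : ℕ) (ε : ℝ) : Continuous (auxBeta k ε) := by
  have h1 : Continuous fun lam : EuclideanSpace ℝ (Fin k) =>
      (2 * max 1 (ε * ‖lam‖ / 2)) :=
    continuous_const.mul (continuous_const.max ((continuous_const.mul continuous_norm).div_const 2))
  have h2 : Continuous fun lam : EuclideanSpace ℝ (Fin k) =>
      ε / (2 * max 1 (ε * ‖lam‖ / 2)) :=
    continuous_const.div h1 (fun lam => by positivity)
  exact h2.smul continuous_id

lemma auxBeta_inner (k : ℕ) (ε : ℝ) (lam : EuclideanSpace ℝ (Fin k)) :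
    ⟪lam, auxBeta k ε lam⟫ = (ε / (2 * max 1 (ε * ‖lam‖ / 2))) * ‖lam‖ ^ 2 := by
  rw [auxBeta, real_inner_smul_right, real_inner_self_eq_norm_sq]

lemma auxBeta_norm (k : ℕ) {ε : ℝ} (hε : 0 ≤ ε) (lam : EuclideanSpace ℝ (Fin k)) :
    ‖auxBeta k ε lam‖ = (ε / (2 * max 1 (ε * ‖lam‖ / 2))) * ‖lam‖ := by
  rw [auxBeta, norm_smul, Real.norm_eq_abs, abs_of_nonneg]
  positivity

lemma auxBeta_norm_le_one (k : ℕ) {ε : ℝ} (hε : 0 < ε) (lam : EuclideanSpace ℝ (Fin k)) :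
    ‖auxBeta k ε lam‖ ≤ 1 := by
  rw [auxBeta_norm k hε.le lam]
  set n := ‖lam‖ with hn
  have hn0 : 0 ≤ n := norm_nonneg _
  have hm1 : (1:ℝ) ≤ max 1 (ε * n / 2) := le_max_left _ _
  have hm2 : ε * n / 2 ≤ max 1 (ε * n / 2) := le_max_right _ _
  rw [div_mul_eq_mul_div, div_le_one (by linarith)]
  linarith

lemma auxBeta_p_nonneg (k : ℕ) {ε : ℝ} (hε : 0 < ε) (lam : EuclideanSpace ℝ (Fin k)) :
    0 ≤ ε * ⟪lam, auxBeta k ε lam⟫ - ‖auxBeta k ε lam‖ ^ 2 := by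
  rw [auxBeta_inner, auxBeta_norm k hε.le]
  set n := ‖lam‖ with hn
  have hn0 : 0 ≤ n := norm_nonneg _
  set m := max 1 (ε * n / 2) with hm
  have hm1 : (1:ℝ) ≤ m := le_max_left _ _
  set a := ε / (2 * m) with ha
  have ha0 : 0 < a := div_pos hε (by linarith)
  have haε : a ≤ ε := div_le_self hε.le (by linarith)
  nlinarith [mul_nonneg (mul_nonneg ha0.le (mul_self_nonneg n)) (sub_nonneg.mpr haε), sq_nonneg n]

lemma auxBeta_p_ge (k : ℕ) {ε : ℝ} (hε : 0 < ε) (lam : EuclideanSpace ℝ (Fin k)) :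
    ε * ‖lam‖ - 1 ≤ ε * ⟪lam, auxBeta k ε lam⟫ - ‖auxBeta k ε lam‖ ^ 2 := by
  rw [auxBeta_inner, auxBeta_norm k hε.le]
  set n := ‖lam‖ with hn
  have hn0 : 0 ≤ n := norm_nonneg _
  set m := max 1 (ε * n / 2) with hm
  have hm1 : (1:ℝ) ≤ m := le_max_left _ _
  have hm2 : ε * n / 2 ≤ m := le_max_right _ _
  set a := ε / (2 * m) with ha
  have haε : a * (2 * m) = ε := div_mul_cancel₀ _ (by positivity)
  rcases max_choice 1 (ε * n / 2) with h | h
  · rw [← hm] at h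
    have h2a : 2 * a = ε := by rw [h] at haε; linarith
    rw [← h2a]
    nlinarith [sq_nonneg (a * n - 1)]
  · rw [← hm] at h
    have han : a * n = 1 := by
      have h2 : a * (2 * (ε * n / 2)) = ε := by rw [← h]; exact haε
      have h3 : ε * (a * n - 1) = 0 := by ring_nf; ring_nf at h2; linarith
      have := mul_eq_zero.mp h3
      rcases this with h4 | h4
      · exact absurd h4 (ne_of_gt hε)
      · linarith
    have h5 : ε * (a * n ^ 2) = ε * n := by
      rw [show a * n ^ 2 = (a * n) * n by ring, han, one_mul]
    rw [h5, show (a * n) ^ 2 = (a*n)*(a*n) by ring, han]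
    norm_num

lemma auxBeta_max (k : ℕ) {ε : ℝ} (hε : 0 < ε) (lam b : EuclideanSpace ℝ (Fin k))
    (hb : ‖b‖ ≤ 1) :
    ε * ⟪lam, b⟫ - ‖b‖ ^ 2 ≤ ε * ⟪lam, auxBeta k ε lam⟫ - ‖auxBeta k ε lam‖ ^ 2 := by
  rw [auxBeta_inner, auxBeta_norm k hε.le]
  have hib : ⟪lam, b⟫ ≤ ‖lam‖ * ‖b‖ := real_inner_le_norm lam b
  have hib' : ε * ⟪lam, b⟫ ≤ ε * (‖lam‖ * ‖b‖) := mul_le_mul_of_nonneg_left hib hε.le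
  set n := ‖lam‖ with hn
  have hn0 : 0 ≤ n := norm_nonneg _
  set B := ‖b‖ with hB
  have hB0 : 0 ≤ B := norm_nonneg _
  set m := max 1 (ε * n / 2) with hm
  have hm1 : (1:ℝ) ≤ m := le_max_left _ _
  have hm2 : ε * n / 2 ≤ m := le_max_right _ _
  set a := ε / (2 * m) with ha
  have haε : a * (2 * m) = ε := div_mul_cancel₀ _ (by positivity)
  rcases max_choice 1 (ε * n / 2) with h | h
  · rw [← hm] at h
    have h2a : 2 * a = ε := by rw [h] at haε; linarith
    rw [← h2a]
    nlinarith [sq_nonneg (a * n - B)]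
  · rw [← hm] at h
    have han : a * n = 1 := by
      have h2 : a * (2 * (ε * n / 2)) = ε := by rw [← h]; exact haε
      have h3 : ε * (a * n - 1) = 0 := by ring_nf; ring_nf at h2; linarith
      rcases mul_eq_zero.mp h3 with h4 | h4
      · exact absurd h4 (ne_of_gt hε)
      · linarith
    have hεn : 2 ≤ ε * n := by
      have := h ▸ hm1
      linarith
    have h5 : ε * (a * n ^ 2) = ε * n := by
      rw [show a * n ^ 2 = (a * n) * n by ring, han, one_mul]
    rw [h5, show (a * n) ^ 2 = (a*n)*(a*n) by ring, han]
    nlinarith [mul_nonneg (sub_nonneg.mpr hb) (show 0 ≤ ε * n - 1 - B by linarith)]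

lemma aux_core {k : ℕ} {M : Type*} [TopologicalSpace M] [CompactSpace M]
    (F0 : M → ℝ) (Fs : M → EuclideanSpace ℝ (Fin k))
    (hF0 : Continuous F0) (hFs : Continuous Fs)
    (Dd : EuclideanSpace ℝ (Fin k) → M) (hDd : Continuous Dd)
    (hmx : ∀ (lam : EuclideanSpace ℝ (Fin k)) (x : M),
      F0 x + ⟪lam, Fs x⟫ ≤ F0 (Dd lam) + ⟪lam, Fs (Dd lam)⟫)
    (c' : EuclideanSpace ℝ (Fin k)) (y0 : ℝ)
    (hweak : ∀ lam : EuclideanSpace ℝ (Fin k),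
      y0 + ⟪lam, c'⟫ ≤ F0 (Dd lam) + ⟪lam, Fs (Dd lam)⟫)
    (ε : ℝ) (hε : 0 < ε) :
    ∃ x : M, ‖Fs x - c'‖ ≤ ε ∧ y0 ≤ F0 x := by
  set G : EuclideanSpace ℝ (Fin k) → ℝ := fun lam =>
    F0 (Dd lam) + ⟪lam, Fs (Dd lam)⟫ +
      (ε * ⟪lam, auxBeta k ε lam⟫ - ‖auxBeta k ε lam‖ ^ 2) with hG
  set Ψ : EuclideanSpace ℝ (Fin k) → EuclideanSpace ℝ (Fin k) := fun lam =>
    Fs (Dd lam) + ε • auxBeta k ε lam with hΨ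
  set φ : EuclideanSpace ℝ (Fin k) → ℝ := fun lam => G lam - ⟪lam, c'⟫ with hφdef
  have hΨcont : Continuous Ψ :=
    (hFs.comp hDd).add ((auxBeta_continuous k ε).const_smul ε)
  have hGcont : Continuous G :=
    ((hF0.comp hDd).add (continuous_id.inner (hFs.comp hDd))).add
      ((continuous_const.mul (continuous_id.inner (auxBeta_continuous k ε))).sub
        (((auxBeta_continuous k ε).norm).pow 2))
  have hφcont : Continuous φ := hGcont.sub (continuous_id.inner continuous_const)
  -- subgradient inequality
  have hsub : ∀ lam lam', G lam + ⟪lam' - lam, Ψ lam⟫ ≤ G lam' := by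
    intro lam lam'
    have h1 := hmx lam' (Dd lam)
    have h2 := auxBeta_max k hε lam' (auxBeta k ε lam) (auxBeta_norm_le_one k hε lam)
    have h3 : ⟪lam' - lam, Ψ lam⟫
        = ⟪lam', Fs (Dd lam)⟫ - ⟪lam, Fs (Dd lam)⟫ +
          (ε * ⟪lam', auxBeta k ε lam⟫ - ε * ⟪lam, auxBeta k ε lam⟫) := by
      simp only [hΨ]
      rw [inner_sub_left, inner_add_right, inner_add_right,
        real_inner_smul_right, real_inner_smul_right]
      ring
    simp only [hG]
    rw [h3]
    linarith
  -- lower bounds for φ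
  have hlb : ∀ lam, y0 + (ε * ⟪lam, auxBeta k ε lam⟫ - ‖auxBeta k ε lam‖ ^ 2) ≤ φ lam := by
    intro lam
    have h1 := hweak lam
    simp only [hφdef, hG]
    linarith
  have hlb0 : ∀ lam, y0 ≤ φ lam := by
    intro lam
    have h1 := auxBeta_p_nonneg k hε lam
    linarith [hlb lam]
  have hcoer : ∀ lam, y0 + (ε * ‖lam‖ - 1) ≤ φ lam := by
    intro lam
    have h1 := auxBeta_p_ge k hε lam
    linarith [hlb lam]
  -- minimizer over a big ball is global
  set R : ℝ := (φ 0 - y0 + 1) / ε with hR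
  have hR0 : 0 ≤ R := by
    have := hlb0 0
    rw [hR]
    exact div_nonneg (by linarith) hε.le
  have hRbig : φ 0 ≤ y0 + (ε * R - 1) := by
    rw [hR]
    rw [mul_div_cancel₀ _ (ne_of_gt hε)]
    ring_nf
    linarith [le_refl (φ 0)]
  obtain ⟨lam0, hlam0mem, hlam0min⟩ :=
    (isCompact_closedBall (0 : EuclideanSpace ℝ (Fin k)) R).exists_isMinOn
      ⟨0, Metric.mem_closedBall_self hR0⟩ hφcont.continuousOn
  have hglobal : ∀ lam, φ lam0 ≤ φ lam := by
    intro lam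
    by_cases hmem : lam ∈ Metric.closedBall (0 : EuclideanSpace ℝ (Fin k)) R
    · exact hlam0min hmem
    · have h1 : R < ‖lam‖ := by
        simp only [Metric.mem_closedBall, dist_zero_right, not_le] at hmem
        exact hmem
      have h2 : ε * R ≤ ε * ‖lam‖ := mul_le_mul_of_nonneg_left h1.le hε.le
      calc φ lam0 ≤ φ 0 := hlam0min (Metric.mem_closedBall_self hR0)
        _ ≤ y0 + (ε * R - 1) := hRbig
        _ ≤ y0 + (ε * ‖lam‖ - 1) := by linarith
        _ ≤ φ lam := hcoer lam
  -- first-order condition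
  have hfo : ∀ e : EuclideanSpace ℝ (Fin k), 0 ≤ ⟪e, Ψ lam0 - c'⟫ := by
    intro e
    have hq : ∀ s : ℝ, 0 < s → 0 ≤ ⟪e, Ψ (lam0 + s • e) - c'⟫ := by
      intro s hs
      have h1 := hsub (lam0 + s • e) lam0
      have h2 : ⟪lam0 - (lam0 + s • e), Ψ (lam0 + s • e)⟫
          = -(s * ⟪e, Ψ (lam0 + s • e)⟫) := by
        rw [show lam0 - (lam0 + s • e) = -(s • e) by abel, inner_neg_left,
          real_inner_smul_left]
      rw [h2] at h1
      have h3 := hglobal (lam0 + s • e)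
      have h4 : ⟪lam0 + s • e, c'⟫ = ⟪lam0, c'⟫ + s * ⟪e, c'⟫ := by
        rw [inner_add_left, real_inner_smul_left]
      simp only [hφdef] at h3
      rw [h4] at h3
      have h5 : 0 ≤ s * ⟪e, Ψ (lam0 + s • e) - c'⟫ := by
        rw [inner_sub_right]
        nlinarith
      by_contra hcon
      push_neg at hcon
      nlinarith
    have hcont2 : Continuous fun s : ℝ => ⟪e, Ψ (lam0 + s • e) - c'⟫ :=
      continuous_const.inner
        ((hΨcont.comp (continuous_const.add (continuous_id.smul continuous_const))).sub
          continuous_const)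
    have htend : Filter.Tendsto (fun s : ℝ => ⟪e, Ψ (lam0 + s • e) - c'⟫)
        (nhdsWithin 0 (Set.Ioi 0)) (nhds ⟪e, Ψ lam0 - c'⟫) := by
      have h6 := (hcont2.tendsto 0).mono_left
        (nhdsWithin_le_nhds (s := Set.Ioi (0:ℝ)))
      simpa using h6
    refine ge_of_tendsto htend ?_
    filter_upwards [self_mem_nhdsWithin] with s hs
    exact hq s hs
  have hΨc : Ψ lam0 = c' := by
    have h := hfo (c' - Ψ lam0)
    have h2 : ⟪c' - Ψ lam0, Ψ lam0 - c'⟫ = -‖Ψ lam0 - c'‖ ^ 2 := by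
      rw [show c' - Ψ lam0 = -(Ψ lam0 - c') by abel, inner_neg_left,
        real_inner_self_eq_norm_sq]
    rw [h2] at h
    have h3 : ‖Ψ lam0 - c'‖ = 0 := by
      nlinarith [norm_nonneg (Ψ lam0 - c')]
    exact sub_eq_zero.mp (norm_eq_zero.mp h3)
  refine ⟨Dd lam0, ?_, ?_⟩
  · have h1 : Fs (Dd lam0) - c' = -(ε • auxBeta k ε lam0) := by
      have h0 : Fs (Dd lam0) + ε • auxBeta k ε lam0 = c' := by
        rw [← hΨc]
      rw [← h0]; abel
    rw [h1, norm_neg, norm_smul, Real.norm_eq_abs, abs_of_pos hε]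
    have h2 := auxBeta_norm_le_one k hε lam0
    nlinarith
  · have h2 : ⟪lam0, c'⟫ = ⟪lam0, Fs (Dd lam0)⟫ + ε * ⟪lam0, auxBeta k ε lam0⟫ := by
      rw [← hΨc]
      simp only [hΨ]
      rw [inner_add_right, real_inner_smul_right]
    have h3 := hlb0 lam0
    simp only [hφdef, hG] at h3
    rw [h2] at h3
    nlinarith [sq_nonneg ‖auxBeta k ε lam0‖]

theorem stmt_1 {k : ℕ} {M : Type*} [TopologicalSpace M] [CompactSpace M]
    (f : M → Fin (k + 1) → ℝ) (hf : Continuous f)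
    (D : {t : Fin (k + 1) → ℝ // 0 ≤ t 0 ∧ t ≠ 0} → M)
    (hD : Continuous D)
    (hmax : ∀ t : {t : Fin (k + 1) → ℝ // 0 ≤ t 0 ∧ t ≠ 0}, ∀ x : M,
      ∑ i, t.1 i * f x i ≤ ∑ i, t.1 i * f (D t) i) :
    ∀ c : Fin k → ℝ,
      sSup {y : EReal | ∃ x : M, (∀ i : Fin k, f x i.succ = c i) ∧ y = ((f x 0 : ℝ) : EReal)} =
      sSup {v : EReal | ∃ y ∈ convexHull ℝ (Set.range f),
        (∀ i : Fin k, y i.succ = c i) ∧ v = ((y 0 : ℝ) : EReal)} := by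
  intro c
  have hext : ∀ lam : EuclideanSpace ℝ (Fin k),
      0 ≤ (Fin.cons 1 (fun j => lam j) : Fin (k+1) → ℝ) 0 ∧
        (Fin.cons 1 (fun j => lam j) : Fin (k+1) → ℝ) ≠ 0 := by
    intro lam
    refine ⟨by simp, fun h => ?_⟩
    have h0 := congrFun h 0
    simp [Fin.cons_zero] at h0
  set c' : EuclideanSpace ℝ (Fin k) := WithLp.toLp 2 (fun j => c j) with hc'def
  set Fs : M → EuclideanSpace ℝ (Fin k) := fun x => WithLp.toLp 2 (fun j => f x j.succ) with hFsdef
  set F0 : M → ℝ := fun x => f x 0 with hF0def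
  set Dd : EuclideanSpace ℝ (Fin k) → M :=
    fun lam => D ⟨Fin.cons 1 (fun j => lam j), hext lam⟩ with hDddef
  have hF0cont : Continuous F0 := (continuous_apply 0).comp hf
  have hFscont : Continuous Fs := by
    have h1 : Continuous fun x : M => (fun j : Fin k => f x j.succ) :=
      continuous_pi fun j => (continuous_apply j.succ).comp hf
    exact (PiLp.continuous_toLp 2 fun _ : Fin k => ℝ).comp h1
  have hDdcont : Continuous Dd := by
    apply hD.comp
    apply Continuous.subtype_mk
    apply continuous_pi
    intro i
    refine Fin.cases ?_ ?_ i
    · simpa using continuous_const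
    · intro j
      have hcj : Continuous fun a : EuclideanSpace ℝ (Fin k) => a.ofLp j :=
        (continuous_apply j).comp (PiLp.continuous_ofLp 2 (fun _ : Fin k => ℝ))
      simpa using hcj
  have hinner : ∀ lam w : EuclideanSpace ℝ (Fin k), ⟪lam, w⟫ = ∑ j, lam j * w j := by
    intro lam w
    simp [PiLp.inner_apply, RCLike.inner_apply, mul_comm]
  have hsum : ∀ (lam : EuclideanSpace ℝ (Fin k)) (z : Fin (k+1) → ℝ),
      ∑ i, (Fin.cons 1 (fun j => lam j) : Fin (k+1) → ℝ) i * z i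
        = z 0 + ∑ j, lam j * z j.succ := by
    intro lam z
    rw [Fin.sum_univ_succ]
    simp [Fin.cons_succ, Fin.cons_zero]
  have hmx : ∀ (lam : EuclideanSpace ℝ (Fin k)) (x : M),
      F0 x + ⟪lam, Fs x⟫ ≤ F0 (Dd lam) + ⟪lam, Fs (Dd lam)⟫ := by
    intro lam x
    have h := hmax ⟨Fin.cons 1 (fun j => lam j), hext lam⟩ x
    rw [hsum lam (f x), hsum lam (f (D _))] at h
    rw [hinner, hinner]
    simp only [hFsdef, hF0def, hDddef]
    exact h
  apply le_antisymm
  · refine sSup_le_sSup ?_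
    rintro v ⟨x, hxc, rfl⟩
    exact ⟨f x, subset_convexHull ℝ (Set.range f) (Set.mem_range_self x), hxc, rfl⟩
  · refine sSup_le ?_
    rintro v ⟨y, hy, hyc, rfl⟩
    have hweak : ∀ lam : EuclideanSpace ℝ (Fin k),
        y 0 + ⟪lam, c'⟫ ≤ F0 (Dd lam) + ⟪lam, Fs (Dd lam)⟫ := by
      intro lam
      have hlin : IsLinearMap ℝ fun z : Fin (k+1) → ℝ =>
          ∑ i, (Fin.cons 1 (fun j => lam j) : Fin (k+1) → ℝ) i * z i := by
        constructor
        · intro a b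
          simp [Pi.add_apply, mul_add, Finset.sum_add_distrib]
        · intro m a
          simp only [Pi.smul_apply, smul_eq_mul, Finset.mul_sum]
          exact Finset.sum_congr rfl fun i _ => by ring
      have hhalf : Set.range f ⊆ {z : Fin (k+1) → ℝ |
          ∑ i, (Fin.cons 1 (fun j => lam j) : Fin (k+1) → ℝ) i * z i
            ≤ ∑ i, (Fin.cons 1 (fun j => lam j) : Fin (k+1) → ℝ) i * f (Dd lam) i} := by
        rintro _ ⟨x, rfl⟩
        exact hmax ⟨Fin.cons 1 (fun j => lam j), hext lam⟩ x
      have h1 := convexHull_min hhalf (convex_halfSpace_le hlin _) hy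
      have h2 : ∑ i, (Fin.cons 1 (fun j => lam j) : Fin (k+1) → ℝ) i * y i
          ≤ ∑ i, (Fin.cons 1 (fun j => lam j) : Fin (k+1) → ℝ) i * f (Dd lam) i := h1
      rw [hsum lam y, hsum lam (f (Dd lam))] at h2
      have hcy : ∑ j, lam j * y j.succ = ∑ j, lam j * c' j :=
        Finset.sum_congr rfl fun j _ => by rw [hyc j]
      rw [hinner, hinner]
      simp only [hFsdef, hF0def]
      rw [← hcy]
      exact h2
    have hcore : ∀ n : ℕ, ∃ x : M, ‖Fs x - c'‖ ≤ 1/((n:ℝ)+1) ∧ y 0 ≤ F0 x := by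
      intro n
      exact aux_core F0 Fs hF0cont hFscont Dd hDdcont hmx c' (y 0) hweak
        (1/((n:ℝ)+1)) (by positivity)
    set V : ℕ → Set M := fun n => {x | ‖Fs x - c'‖ ≤ 1/((n:ℝ)+1) ∧ y 0 ≤ F0 x} with hV
    have hVcl : ∀ n, IsClosed (V n) := by
      intro n
      exact ((isClosed_le ((hFscont.sub continuous_const).norm) continuous_const).inter
        (isClosed_le continuous_const hF0cont))
    have hVne : ∀ n, (V n).Nonempty := by
      intro n
      obtain ⟨x, h1, h2⟩ := hcore n
      exact ⟨x, h1, h2⟩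
    have hVnest : ∀ n, V (n+1) ⊆ V n := by
      intro n x hx
      refine ⟨le_trans hx.1 ?_, hx.2⟩
      push_cast
      apply one_div_le_one_div_of_le
      · positivity
      · linarith
    obtain ⟨x, hx⟩ := IsCompact.nonempty_iInter_of_sequence_nonempty_isCompact_isClosed
      V hVnest hVne ((hVcl 0).isCompact) hVcl
    simp only [Set.mem_iInter] at hx
    have hnorm0 : ‖Fs x - c'‖ ≤ 0 := by
      have htd : Filter.Tendsto (fun n : ℕ => 1/((n:ℝ)+1)) Filter.atTop (nhds 0) :=
        tendsto_one_div_add_atTop_nhds_zero_nat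
      exact ge_of_tendsto htd (Filter.Eventually.of_forall fun n => (hx n).1)
    have hFsx : Fs x = c' := sub_eq_zero.mp (norm_le_zero_iff.mp hnorm0)
    have hxc : ∀ i : Fin k, f x i.succ = c i := by
      intro i
      exact congrArg (fun v : EuclideanSpace ℝ (Fin k) => v i) hFsx
    have hy0 : y 0 ≤ f x 0 := (hx 0).2
    calc ((y 0 : ℝ) : EReal) ≤ ((f x 0 : ℝ) : EReal) := by exact_mod_cast hy0
      _ ≤ sSup {w : EReal | ∃ x : M, (∀ i : Fin k, f x i.succ = c i) ∧
          w = ((f x 0 : ℝ) : EReal)} := le_sSup ⟨x, hxc, rfl⟩
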